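/- If f ∈ C⁴[−1,1] with f⁽⁴⁾ ≥ 0 on [−1,1], then 0 ≤ ∫₋₁¹ f(t) dt − [f(−√3/3) + f(√3/3)] ≤ [(1/3)f(−1) + (4/3)f(0) + (1/3)f(1)] − ∫₋₁¹ f(t) dt. That is, the remainder of the 2-point Gauss quadrature is nonnegative and not greater than the remainder of Simpson's rule for 3-convex functions. -/

import Mathlib

open MeasureTheory intervalIntegral Set

namespace GS

noncomputable def s : ℝ := Real.sqrt 3 / 3

lemma hs2 : s^2 = 1/3 := by
  have h : Real.sqrt 3 ^ 2 = 3 := Real.sq_sqrt (by norm_num)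
  rw [s, div_pow, h]; norm_num

lemma hslb : 0.577 < s := by
  have h : Real.sqrt 3 ^ 2 = 3 := Real.sq_sqrt (by norm_num)
  have h0 : 0 < Real.sqrt 3 := Real.sqrt_pos.mpr (by norm_num)
  rw [s]; nlinarith

lemma hsub : s < 0.578 := by
  have h : Real.sqrt 3 ^ 2 = 3 := Real.sq_sqrt (by norm_num)
  have h0 : 0 < Real.sqrt 3 := Real.sqrt_pos.mpr (by norm_num)
  rw [s]; nlinarith

lemma kernelG {t : ℝ} (h1 : -1 ≤ t) (h2 : t ≤ 1) :
    0 ≤ (1-t)^4/4 - max (-s - t) 0 ^ 3 - max (s - t) 0 ^ 3 := by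
  have e2 := hs2; have lb := hslb; have ub := hsub
  rcases le_or_gt t (-s) with h | h
  · rw [max_eq_left (by linarith), max_eq_left (by linarith)]
    nlinarith [pow_nonneg (by linarith : (0:ℝ) ≤ 1+t) 4]
  rcases le_or_gt t s with h' | h'
  · rw [max_eq_right (by linarith), max_eq_left (by linarith)]
    nlinarith [sq_nonneg (t+s), sq_nonneg (t-s), sq_nonneg t, sq_nonneg (1-t),
      sq_nonneg ((1-t)^2 - 2*(s-t)), mul_nonneg (by linarith : (0:ℝ) ≤ t+s) (by linarith : (0:ℝ) ≤ s-t)]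
  · rw [max_eq_right (by linarith), max_eq_right (by linarith)]
    nlinarith [pow_nonneg (by linarith : (0:ℝ) ≤ 1-t) 4]

lemma kernelGS {t : ℝ} (h1 : -1 ≤ t) (h2 : t ≤ 1) :
    ((1-t)^4/2 - max (-s - t) 0 ^ 3 - max (s - t) 0 ^ 3
      - (4/3) * max (-t) 0 ^ 3 - (1/3) * (1-t)^3) ≤ 0 := by
  have e2 := hs2; have lb := hslb; have ub := hsub
  rcases le_or_gt t (-s) with h | h
  · rw [max_eq_left (by linarith), max_eq_left (by linarith), max_eq_left (by linarith)]
    nlinarith [pow_nonneg (by linarith : (0:ℝ) ≤ 1+t) 3, sq_nonneg (1+t)]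
  rcases le_or_gt t 0 with h0 | h0
  · rw [max_eq_right (by linarith), max_eq_left (by linarith), max_eq_left (by linarith)]
    nlinarith [sq_nonneg (t+s), sq_nonneg (t-s), sq_nonneg t, sq_nonneg (1-t),
      mul_nonneg (by linarith : (0:ℝ) ≤ t+s) (by linarith : (0:ℝ) ≤ -t), sq_nonneg (s+t), sq_nonneg (1+3*t)]
  rcases le_or_gt t s with h' | h'
  · rw [max_eq_right (by linarith), max_eq_left (by linarith), max_eq_right (by linarith)]
    nlinarith [sq_nonneg (t+s), sq_nonneg (t-s), sq_nonneg t, sq_nonneg (1-t),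
      mul_nonneg (by linarith : (0:ℝ) ≤ t) (by linarith : (0:ℝ) ≤ s-t), sq_nonneg (s-t), sq_nonneg (1-3*t)]
  · rw [max_eq_right (by linarith), max_eq_right (by linarith), max_eq_right (by linarith)]
    nlinarith [pow_nonneg (by linarith : (0:ℝ) ≤ 1-t) 3]

lemma integral_cubic (a0 a1 a2 a3 : ℝ) :
    ∫ x in (-1:ℝ)..1, (a0 + a1*x + a2*x^2 + a3*x^3) = 2*a0 + (2/3)*a2 := by
  have I0 : IntervalIntegrable (fun _ : ℝ => a0) volume (-1) 1 :=
    Continuous.intervalIntegrable (by continuity) _ _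
  have I1 : IntervalIntegrable (fun x : ℝ => a1*x) volume (-1) 1 :=
    Continuous.intervalIntegrable (by continuity) _ _
  have I2 : IntervalIntegrable (fun x : ℝ => a2*x^2) volume (-1) 1 :=
    Continuous.intervalIntegrable (by continuity) _ _
  have I3 : IntervalIntegrable (fun x : ℝ => a3*x^3) volume (-1) 1 :=
    Continuous.intervalIntegrable (by continuity) _ _
  rw [intervalIntegral.integral_add ((I0.add I1).add I2) I3,
    intervalIntegral.integral_add (I0.add I1) I2,
    intervalIntegral.integral_add I0 I1,
    intervalIntegral.integral_const_mul, intervalIntegral.integral_const_mul,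
    intervalIntegral.integral_const_mul]
  simp [integral_pow, integral_id]
  ring

set_option maxHeartbeats 1000000 in
lemma core {g d4 : ℝ → ℝ} {c0 c1 c2 c3 : ℝ}
    (hc4 : ContinuousOn d4 (Icc (-1:ℝ) 1))
    (h4n : ∀ t ∈ Icc (-1:ℝ) 1, 0 ≤ d4 t)
    (key : ∀ x ∈ Icc (-1:ℝ) 1, g x = c0 + c1*(x+1) + c2*(x+1)^2/2 + c3*(x+1)^3/6
        + (1/6) * ∫ t in (-1:ℝ)..1, max (x - t) 0 ^ 3 * d4 t) :
    0 ≤ (∫ t in (-1:ℝ)..1, g t) - (g (-s) + g s) ∧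
    (∫ t in (-1:ℝ)..1, g t) - (g (-s) + g s) ≤
      ((1 / 3) * g (-1) + (4 / 3) * g 0 + (1 / 3) * g 1) - ∫ t in (-1:ℝ)..1, g t := by
  have e2 := hs2; have lb := hslb; have ub := hsub
  have hcm1 : ∀ t : ℝ, Continuous fun x : ℝ => max (x - t) 0 ^ 3 :=
    fun t => ((continuous_id.sub continuous_const).max continuous_const).pow 3
  have hcm2 : ∀ c : ℝ, Continuous fun t : ℝ => max (c - t) 0 ^ 3 :=
    fun c => ((continuous_const.sub continuous_id).max continuous_const).pow 3
  have hcq : Continuous fun t : ℝ => (1-t)^4/4 :=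
    ((continuous_const.sub continuous_id).pow 4).div_const 4
  have hcc : Continuous fun t : ℝ => (1 - t)^3 := (continuous_const.sub continuous_id).pow 3
  have hsmem : s ∈ Icc (-1:ℝ) 1 := ⟨by linarith, by linarith⟩
  have hmsmem : -s ∈ Icc (-1:ℝ) 1 := ⟨by linarith, by linarith⟩
  have hGeq : ∀ x : ℝ, (∫ t in (-1:ℝ)..1, max (x - t) 0 ^ 3 * d4 t)
      = ∫ t in Ioc (-1:ℝ) 1, max (x - t) 0 ^ 3 * d4 t :=
    fun x => intervalIntegral.integral_of_le (by norm_num)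
  have hIOn : ∀ h : ℝ → ℝ, Continuous h →
      IntegrableOn (fun t => h t * d4 t) (Ioc (-1:ℝ) 1) volume := fun h hh =>
    (ContinuousOn.integrableOn_compact isCompact_Icc (hh.continuousOn.mul hc4)).mono_set
      Ioc_subset_Icc_self
  -- Fubini
  have hFcont : ContinuousOn (fun p : ℝ × ℝ => max (p.1 - p.2) 0 ^ 3 * d4 p.2)
      ((Icc (-1:ℝ) 1) ×ˢ (Icc (-1:ℝ) 1)) := by
    apply ContinuousOn.mul
    · exact (((continuous_fst.sub continuous_snd).max continuous_const).pow 3).continuousOn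
    · exact hc4.comp continuous_snd.continuousOn (fun p hp => hp.2)
  have hFint : Integrable (fun p : ℝ × ℝ => max (p.1 - p.2) 0 ^ 3 * d4 p.2)
      ((volume.restrict (Ioc (-1:ℝ) 1)).prod (volume.restrict (Ioc (-1:ℝ) 1))) := by
    rw [Measure.prod_restrict]
    exact (ContinuousOn.integrableOn_compact (isCompact_Icc.prod isCompact_Icc) hFcont).mono_set
      (prod_mono Ioc_subset_Icc_self Ioc_subset_Icc_self)
  have hGint : Integrable (fun x => ∫ t in Ioc (-1:ℝ) 1, max (x - t) 0 ^ 3 * d4 t)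
      (volume.restrict (Ioc (-1:ℝ) 1)) := hFint.integral_prod_left
  have hswap : (∫ x in Ioc (-1:ℝ) 1, ∫ t in Ioc (-1:ℝ) 1, max (x - t) 0 ^ 3 * d4 t)
      = ∫ t in Ioc (-1:ℝ) 1, ((1-t)^4/4) * d4 t := by
    rw [MeasureTheory.integral_integral_swap hFint]
    apply setIntegral_congr_fun measurableSet_Ioc
    intro t ht
    beta_reduce
    rw [MeasureTheory.integral_mul_const]
    congr 1
    rw [← intervalIntegral.integral_of_le (by norm_num : (-1:ℝ) ≤ 1)]
    have i1 : IntervalIntegrable (fun x : ℝ => max (x - t) 0 ^ 3) volume (-1) t :=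
      Continuous.intervalIntegrable (hcm1 t) _ _
    have i2 : IntervalIntegrable (fun x : ℝ => max (x - t) 0 ^ 3) volume t 1 :=
      Continuous.intervalIntegrable (hcm1 t) _ _
    rw [← intervalIntegral.integral_add_adjacent_intervals i1 i2]
    have e1 : ∫ x in (-1:ℝ)..t, max (x - t) 0 ^ 3 = ∫ x in (-1:ℝ)..t, (0:ℝ) := by
      apply intervalIntegral.integral_congr
      intro u hu
      rw [uIcc_of_le ht.1.le] at hu
      have hm : max (u - t) 0 = 0 := max_eq_right (by linarith [hu.2])
      simp [hm]
    have e2' : ∫ x in t..(1:ℝ), max (x - t) 0 ^ 3 = ∫ x in t..(1:ℝ), (x - t) ^ 3 := by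
      apply intervalIntegral.integral_congr
      intro u hu
      rw [uIcc_of_le ht.2] at hu
      have hm : max (u - t) 0 = u - t := max_eq_left (by linarith [hu.1])
      simp [hm]
    rw [e1, e2', intervalIntegral.integral_comp_sub_right (fun u => u^3) t, integral_pow]
    norm_num
  -- integral of g
  have hPInt : Integrable (fun x : ℝ => c0 + c1*(x+1) + c2*(x+1)^2/2 + c3*(x+1)^3/6)
      (volume.restrict (Ioc (-1:ℝ) 1)) :=
    (ContinuousOn.integrableOn_compact isCompact_Icc
      (Continuous.continuousOn (by fun_prop))).mono_set Ioc_subset_Icc_self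
  have hIg : ∫ t in (-1:ℝ)..1, g t
      = (2*c0 + 2*c1 + (4/3)*c2 + (2/3)*c3)
        + (1/6) * ∫ t in Ioc (-1:ℝ) 1, ((1-t)^4/4) * d4 t := by
    rw [intervalIntegral.integral_of_le (by norm_num : (-1:ℝ) ≤ 1)]
    have hcongr : ∫ x in Ioc (-1:ℝ) 1, g x
        = ∫ x in Ioc (-1:ℝ) 1, ((c0 + c1*(x+1) + c2*(x+1)^2/2 + c3*(x+1)^3/6)
            + (1/6) * ∫ t in Ioc (-1:ℝ) 1, max (x - t) 0 ^ 3 * d4 t) := by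
      apply setIntegral_congr_fun measurableSet_Ioc
      intro x hx
      rw [key x (Ioc_subset_Icc_self hx), hGeq x]
    rw [hcongr, MeasureTheory.integral_add hPInt (hGint.const_mul (1/6)),
      MeasureTheory.integral_const_mul, hswap]
    congr 1
    rw [← intervalIntegral.integral_of_le (by norm_num : (-1:ℝ) ≤ 1)]
    rw [show (fun x : ℝ => c0 + c1*(x+1) + c2*(x+1)^2/2 + c3*(x+1)^3/6)
        = fun x : ℝ => (c0 + c1 + c2/2 + c3/6) + (c1 + c2 + c3/2)*x
            + (c2/2 + c3/2)*x^2 + (c3/6)*x^3 from funext fun x => by ring]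
    rw [integral_cubic]
    ring
  -- node kernel facts
  have hGm1 : (∫ t in (-1:ℝ)..1, max ((-1:ℝ) - t) 0 ^ 3 * d4 t) = 0 := by
    have h0 : (∫ t in (-1:ℝ)..1, max ((-1:ℝ) - t) 0 ^ 3 * d4 t)
        = ∫ t in (-1:ℝ)..1, (0:ℝ) := by
      apply intervalIntegral.integral_congr
      intro t ht
      rw [uIcc_of_le (by norm_num : (-1:ℝ) ≤ 1)] at ht
      have hm : max ((-1:ℝ) - t) 0 = 0 := max_eq_right (by linarith [ht.1])
      simp [hm]
    rw [h0]; simp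
  have hG1 : (∫ t in (-1:ℝ)..1, max ((1:ℝ) - t) 0 ^ 3 * d4 t)
      = ∫ t in Ioc (-1:ℝ) 1, (1 - t)^3 * d4 t := by
    rw [hGeq 1]
    apply setIntegral_congr_fun measurableSet_Ioc
    intro t ht
    have hm : max ((1:ℝ) - t) 0 = 1 - t := max_eq_left (by linarith [ht.2])
    beta_reduce
    rw [hm]
  -- kernel inequality 1
  have iA : IntegrableOn (fun t : ℝ => (1-t)^4/4 * d4 t) (Ioc (-1:ℝ) 1) volume := hIOn _ hcq
  have iBm : IntegrableOn (fun t : ℝ => max (-s - t) 0 ^ 3 * d4 t) (Ioc (-1:ℝ) 1) volume :=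
    hIOn _ (hcm2 (-s))
  have iBp : IntegrableOn (fun t : ℝ => max (s - t) 0 ^ 3 * d4 t) (Ioc (-1:ℝ) 1) volume :=
    hIOn _ (hcm2 s)
  have iB0 : IntegrableOn (fun t : ℝ => max (0 - t) 0 ^ 3 * d4 t) (Ioc (-1:ℝ) 1) volume :=
    hIOn _ (hcm2 0)
  have iB1 : IntegrableOn (fun t : ℝ => (1 - t)^3 * d4 t) (Ioc (-1:ℝ) 1) volume := hIOn _ hcc
  have iABm : IntegrableOn (fun t : ℝ => (1-t)^4/4 * d4 t - max (-s - t) 0 ^ 3 * d4 t)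
      (Ioc (-1:ℝ) 1) volume := iA.sub iBm
  have key1 : 0 ≤ (∫ t in Ioc (-1:ℝ) 1, ((1-t)^4/4) * d4 t)
      - (∫ t in Ioc (-1:ℝ) 1, max (-s - t) 0 ^ 3 * d4 t)
      - (∫ t in Ioc (-1:ℝ) 1, max (s - t) 0 ^ 3 * d4 t) := by
    have h1 : ∫ t in Ioc (-1:ℝ) 1,
          ((1-t)^4/4 * d4 t - max (-s - t) 0 ^ 3 * d4 t - max (s - t) 0 ^ 3 * d4 t)
        = (∫ t in Ioc (-1:ℝ) 1, ((1-t)^4/4) * d4 t)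
          - (∫ t in Ioc (-1:ℝ) 1, max (-s - t) 0 ^ 3 * d4 t)
          - (∫ t in Ioc (-1:ℝ) 1, max (s - t) 0 ^ 3 * d4 t) := by
      rw [MeasureTheory.integral_sub iABm iBp, MeasureTheory.integral_sub iA iBm]
    rw [← h1]
    apply setIntegral_nonneg measurableSet_Ioc
    intro t ht
    have hK := kernelG (t := t) ht.1.le ht.2
    have hd := h4n t (Ioc_subset_Icc_self ht)
    nlinarith [mul_nonneg hK hd]
  -- kernel inequality 2
  have i1 : IntegrableOn (fun t : ℝ => 2 * ((1-t)^4/4 * d4 t)) (Ioc (-1:ℝ) 1) volume :=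
    iA.const_mul 2
  have i4 : IntegrableOn (fun t : ℝ => (4/3) * (max (0 - t) 0 ^ 3 * d4 t)) (Ioc (-1:ℝ) 1) volume :=
    iB0.const_mul (4/3)
  have i5 : IntegrableOn (fun t : ℝ => (1/3) * ((1 - t)^3 * d4 t)) (Ioc (-1:ℝ) 1) volume :=
    iB1.const_mul (1/3)
  have i12 : IntegrableOn (fun t : ℝ => 2 * ((1-t)^4/4 * d4 t) - max (-s - t) 0 ^ 3 * d4 t)
      (Ioc (-1:ℝ) 1) volume := i1.sub iBm
  have i123 : IntegrableOn (fun t : ℝ => 2 * ((1-t)^4/4 * d4 t) - max (-s - t) 0 ^ 3 * d4 t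
      - max (s - t) 0 ^ 3 * d4 t) (Ioc (-1:ℝ) 1) volume := i12.sub iBp
  have i1234 : IntegrableOn (fun t : ℝ => 2 * ((1-t)^4/4 * d4 t) - max (-s - t) 0 ^ 3 * d4 t
      - max (s - t) 0 ^ 3 * d4 t - (4/3) * (max (0 - t) 0 ^ 3 * d4 t)) (Ioc (-1:ℝ) 1) volume :=
    i123.sub i4
  have hsplit : ∫ t in Ioc (-1:ℝ) 1,
        (2 * ((1-t)^4/4 * d4 t) - max (-s - t) 0 ^ 3 * d4 t - max (s - t) 0 ^ 3 * d4 t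
          - (4/3) * (max (0 - t) 0 ^ 3 * d4 t) - (1/3) * ((1 - t)^3 * d4 t))
      = 2*(∫ t in Ioc (-1:ℝ) 1, ((1-t)^4/4) * d4 t)
        - (∫ t in Ioc (-1:ℝ) 1, max (-s - t) 0 ^ 3 * d4 t)
        - (∫ t in Ioc (-1:ℝ) 1, max (s - t) 0 ^ 3 * d4 t)
        - (4/3) * (∫ t in Ioc (-1:ℝ) 1, max (0 - t) 0 ^ 3 * d4 t)
        - (1/3) * (∫ t in Ioc (-1:ℝ) 1, (1 - t)^3 * d4 t) := by
    rw [MeasureTheory.integral_sub i1234 i5, MeasureTheory.integral_sub i123 i4,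
      MeasureTheory.integral_sub i12 iBp, MeasureTheory.integral_sub i1 iBm,
      MeasureTheory.integral_const_mul, MeasureTheory.integral_const_mul,
      MeasureTheory.integral_const_mul]
  have key2 : 2*(∫ t in Ioc (-1:ℝ) 1, ((1-t)^4/4) * d4 t)
        - (∫ t in Ioc (-1:ℝ) 1, max (-s - t) 0 ^ 3 * d4 t)
        - (∫ t in Ioc (-1:ℝ) 1, max (s - t) 0 ^ 3 * d4 t)
        - (4/3) * (∫ t in Ioc (-1:ℝ) 1, max (0 - t) 0 ^ 3 * d4 t)
        - (1/3) * (∫ t in Ioc (-1:ℝ) 1, (1 - t)^3 * d4 t) ≤ 0 := by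
    rw [← hsplit]
    apply setIntegral_nonpos measurableSet_Ioc
    intro t ht
    have h0t : (0:ℝ) - t = -t := by ring
    have hd := h4n t (Ioc_subset_Icc_self ht)
    have hK := kernelGS (t := t) ht.1.le ht.2
    have heq : 2 * ((1-t)^4/4 * d4 t) - max (-s - t) 0 ^ 3 * d4 t - max (s - t) 0 ^ 3 * d4 t
          - (4/3) * (max (0 - t) 0 ^ 3 * d4 t) - (1/3) * ((1 - t)^3 * d4 t)
        = ((1-t)^4/2 - max (-s - t) 0 ^ 3 - max (s - t) 0 ^ 3
          - (4/3) * max (-t) 0 ^ 3 - (1/3) * (1-t)^3) * d4 t := by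
      rw [h0t]; ring
    rw [heq]
    exact mul_nonpos_iff.mpr (Or.inr ⟨hK, hd⟩)
  -- polynomial node sums
  have hPsum : (c0 + c1*(-s+1) + c2*(-s+1)^2/2 + c3*(-s+1)^3/6)
      + (c0 + c1*(s+1) + c2*(s+1)^2/2 + c3*(s+1)^3/6)
      = 2*c0 + 2*c1 + (4/3)*c2 + (2/3)*c3 := by
    linear_combination (c2 + c3) * e2
  have hkm := key (-s) hmsmem
  have hks := key s hsmem
  have hkm1 := key (-1) ⟨le_rfl, by norm_num⟩
  have hk0 := key 0 ⟨by norm_num, by norm_num⟩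
  have hk1 := key 1 ⟨by norm_num, le_rfl⟩
  rw [hGeq (-s)] at hkm
  rw [hGeq s] at hks
  rw [hGm1] at hkm1
  rw [hG1] at hk1
  rw [hGeq 0] at hk0
  constructor
  · rw [hIg, hkm, hks]
    linarith [key1, hPsum]
  · rw [hIg, hkm, hks, hkm1, hk0, hk1]
    linarith [key2, hPsum]
lemma ibp_step {g g' : ℝ → ℝ} (hg : ContinuousOn g (Icc (-1:ℝ) 1))
    (hg' : ContinuousOn g' (Icc (-1:ℝ) 1))
    (hd : ∀ t ∈ Icc (-1:ℝ) 1, HasDerivWithinAt g (g' t) (Icc (-1:ℝ) 1) t)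
    (k : ℕ) {x : ℝ} (hx : x ∈ Icc (-1:ℝ) 1) :
    ((k:ℝ)+1) * ∫ t in (-1:ℝ)..x, (x - t)^k * g t
      = (x+1)^(k+1) * g (-1) + ∫ t in (-1:ℝ)..x, (x - t)^(k+1) * g' t := by
  obtain ⟨hx1, hx2⟩ := hx
  have hsub : Icc (-1:ℝ) x ⊆ Icc (-1:ℝ) 1 := Icc_subset_Icc le_rfl hx2
  have hcont : ContinuousOn (fun t => (x - t)^(k+1) * g t) (Icc (-1:ℝ) x) :=
    (Continuous.continuousOn (by continuity)).mul (hg.mono hsub)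
  have hderiv : ∀ t ∈ Ioo (-1:ℝ) x,
      HasDerivWithinAt (fun t => (x - t)^(k+1) * g t)
        (-((k:ℝ)+1) * ((x-t)^k * g t) + (x-t)^(k+1) * g' t) (Ioi t) t := by
    intro t ht
    have htI : t ∈ Icc (-1:ℝ) 1 := ⟨le_of_lt ht.1, le_trans (le_of_lt ht.2) hx2⟩
    have hgt : HasDerivAt g (g' t) t :=
      (hd t htI).hasDerivAt (Icc_mem_nhds ht.1 (lt_of_lt_of_le ht.2 hx2))
    have h1 : HasDerivAt (fun u : ℝ => x - u) (-1) t := by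
      simpa using (hasDerivAt_id t).const_sub x
    have hp : HasDerivAt (fun u : ℝ => (x - u)^(k+1))
        (((k:ℕ)+1 : ℕ) * (x - t)^(k+1-1) * (-1)) t := h1.pow (k+1)
    have h2 := hp.mul hgt
    have h3 : HasDerivAt (fun t => (x - t)^(k+1) * g t)
        (-((k:ℝ)+1) * ((x-t)^k * g t) + (x-t)^(k+1) * g' t) t := by
      refine h2.congr_deriv ?_
      rw [Nat.add_sub_cancel]
      push_cast
      ring
    exact h3.hasDerivWithinAt
  have i1 : IntervalIntegrable (fun t => (x - t)^k * g t) volume (-1) x := by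
    apply ContinuousOn.intervalIntegrable
    rw [uIcc_of_le hx1]
    exact (Continuous.continuousOn (by continuity)).mul (hg.mono hsub)
  have i2 : IntervalIntegrable (fun t => (x - t)^(k+1) * g' t) volume (-1) x := by
    apply ContinuousOn.intervalIntegrable
    rw [uIcc_of_le hx1]
    exact (Continuous.continuousOn (by continuity)).mul (hg'.mono hsub)
  have hint : IntervalIntegrable
      (fun t => -((k:ℝ)+1) * ((x-t)^k * g t) + (x-t)^(k+1) * g' t) volume (-1) x :=
    (i1.const_mul _).add i2
  have key := integral_eq_sub_of_hasDeriv_right_of_le hx1 hcont hderiv hint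
  rw [intervalIntegral.integral_add (i1.const_mul _) i2,
    intervalIntegral.integral_const_mul] at key
  have hFx : (x - x)^(k+1) * g x = 0 := by simp
  have hFm : (x - (-1:ℝ))^(k+1) * g (-1) = (x+1)^(k+1) * g (-1) := by ring_nf
  rw [hFx] at key
  rw [hFm] at key
  linarith

lemma taylor4 {f : ℝ → ℝ} (hf : ContDiffOn ℝ 4 f (Icc (-1:ℝ) 1)) {x : ℝ} (hx : x ∈ Icc (-1:ℝ) 1) :
    f x = f (-1) + iteratedDerivWithin 1 f (Icc (-1:ℝ) 1) (-1) * (x+1)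
      + iteratedDerivWithin 2 f (Icc (-1:ℝ) 1) (-1) * (x+1)^2 / 2
      + iteratedDerivWithin 3 f (Icc (-1:ℝ) 1) (-1) * (x+1)^3 / 6
      + (1/6) * ∫ t in (-1:ℝ)..x, (x-t)^3 * iteratedDerivWithin 4 f (Icc (-1:ℝ) 1) t := by
  have hu : UniqueDiffOn ℝ (Icc (-1:ℝ) 1) := uniqueDiffOn_Icc (by norm_num)
  have hcont : ∀ k : ℕ, k ≤ 4 → ContinuousOn (iteratedDerivWithin k f (Icc (-1:ℝ) 1)) (Icc (-1:ℝ) 1) :=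
    fun k hk => hf.continuousOn_iteratedDerivWithin (by exact_mod_cast hk) hu
  have hder : ∀ k : ℕ, k < 4 → ∀ t ∈ Icc (-1:ℝ) 1,
      HasDerivWithinAt (iteratedDerivWithin k f (Icc (-1:ℝ) 1))
        (iteratedDerivWithin (k+1) f (Icc (-1:ℝ) 1) t) (Icc (-1:ℝ) 1) t := by
    intro k hk t ht
    have hdiff : DifferentiableWithinAt ℝ (iteratedDerivWithin k f (Icc (-1:ℝ) 1)) (Icc (-1:ℝ) 1) t :=
      (hf.differentiableOn_iteratedDerivWithin (by exact_mod_cast hk) hu) t ht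
    have h1 := hdiff.hasDerivWithinAt
    rwa [← iteratedDerivWithin_succ] at h1
  obtain ⟨hx1, hx2⟩ := hx
  -- step 0: FTC
  have step0 : ∫ t in (-1:ℝ)..x, iteratedDerivWithin 1 f (Icc (-1:ℝ) 1) t = f x - f (-1) := by
    apply integral_eq_sub_of_hasDeriv_right_of_le hx1
    · exact hf.continuousOn.mono (Icc_subset_Icc le_rfl hx2)
    · intro t ht
      have htI : t ∈ Icc (-1:ℝ) 1 := ⟨le_of_lt ht.1, le_trans (le_of_lt ht.2) hx2⟩
      have := hder 0 (by norm_num) t htI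
      rw [iteratedDerivWithin_zero] at this
      exact (this.hasDerivAt (Icc_mem_nhds ht.1 (lt_of_lt_of_le ht.2 hx2))).hasDerivWithinAt
    · apply ContinuousOn.intervalIntegrable
      rw [uIcc_of_le hx1]
      exact (hcont 1 (by norm_num)).mono (Icc_subset_Icc le_rfl hx2)
  have hxI : x ∈ Icc (-1:ℝ) 1 := ⟨hx1, hx2⟩
  have s1 := ibp_step (hcont 1 (by norm_num)) (hcont 2 (by norm_num)) (hder 1 (by norm_num)) 0 hxI
  have s2 := ibp_step (hcont 2 (by norm_num)) (hcont 3 (by norm_num)) (hder 2 (by norm_num)) 1 hxI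
  have s3 := ibp_step (hcont 3 (by norm_num)) (hcont 4 (by norm_num)) (hder 3 (by norm_num)) 2 hxI
  norm_num at s1 s2 s3
  simp only [iteratedDerivWithin_one] at step0 ⊢
  rw [step0] at s1
  linarith


lemma R_eq {d4 : ℝ → ℝ} (hc : ContinuousOn d4 (Icc (-1:ℝ) 1)) {x : ℝ} (hx : x ∈ Icc (-1:ℝ) 1) :
    ∫ t in (-1:ℝ)..x, (x-t)^3 * d4 t = ∫ t in (-1:ℝ)..1, max (x-t) 0 ^ 3 * d4 t := by
  have i1 : IntervalIntegrable (fun t => max (x-t) 0 ^ 3 * d4 t) volume (-1) x := by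
    apply ContinuousOn.intervalIntegrable
    rw [uIcc_of_le hx.1]
    exact (Continuous.continuousOn (by continuity)).mul (hc.mono (Icc_subset_Icc le_rfl hx.2))
  have i2 : IntervalIntegrable (fun t => max (x-t) 0 ^ 3 * d4 t) volume x 1 := by
    apply ContinuousOn.intervalIntegrable
    rw [uIcc_of_le hx.2]
    exact (Continuous.continuousOn (by continuity)).mul (hc.mono (Icc_subset_Icc hx.1 le_rfl))
  rw [← intervalIntegral.integral_add_adjacent_intervals i1 i2]
  have e2 : ∫ t in x..(1:ℝ), max (x-t) 0 ^ 3 * d4 t = 0 := by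
    have : ∫ t in x..(1:ℝ), max (x-t) 0 ^ 3 * d4 t = ∫ t in x..(1:ℝ), (0:ℝ) := by
      apply intervalIntegral.integral_congr
      intro t ht
      rw [uIcc_of_le hx.2] at ht
      have hm : max (x - t) 0 = 0 := max_eq_right (by linarith [ht.1])
      simp [hm]
    rw [this]; simp
  have e1 : ∫ t in (-1:ℝ)..x, max (x-t) 0 ^ 3 * d4 t = ∫ t in (-1:ℝ)..x, (x-t)^3 * d4 t := by
    apply intervalIntegral.integral_congr
    intro t ht
    rw [uIcc_of_le hx.1] at ht
    have hm : max (x - t) 0 = x - t := max_eq_left (by linarith [ht.2])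
    simp [hm]
  rw [e1, e2, add_zero]


end GS

theorem gauss2_remainder_le_simpson_remainder (f : ℝ → ℝ)
    (hf : ContDiffOn ℝ 4 f (Set.Icc (-1:ℝ) 1))
    (h4 : ∀ x ∈ Set.Icc (-1:ℝ) 1, 0 ≤ iteratedDerivWithin 4 f (Set.Icc (-1:ℝ) 1) x) :
    0 ≤ (∫ t in (-1:ℝ)..1, f t) - (f (-(Real.sqrt 3) / 3) + f (Real.sqrt 3 / 3)) ∧
    (∫ t in (-1:ℝ)..1, f t) - (f (-(Real.sqrt 3) / 3) + f (Real.sqrt 3 / 3)) ≤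
      ((1 / 3) * f (-1) + (4 / 3) * f 0 + (1 / 3) * f 1) - ∫ t in (-1:ℝ)..1, f t := by
  have hu : UniqueDiffOn ℝ (Set.Icc (-1:ℝ) 1) := uniqueDiffOn_Icc (by norm_num)
  have hc4 : ContinuousOn (iteratedDerivWithin 4 f (Set.Icc (-1:ℝ) 1)) (Set.Icc (-1:ℝ) 1) :=
    hf.continuousOn_iteratedDerivWithin (by norm_num) hu
  have key : ∀ x ∈ Set.Icc (-1:ℝ) 1, f x = f (-1)
      + (iteratedDerivWithin 1 f (Set.Icc (-1:ℝ) 1) (-1)) * (x+1)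
      + (iteratedDerivWithin 2 f (Set.Icc (-1:ℝ) 1) (-1)) * (x+1)^2 / 2
      + (iteratedDerivWithin 3 f (Set.Icc (-1:ℝ) 1) (-1)) * (x+1)^3 / 6
      + (1/6) * ∫ t in (-1:ℝ)..1, max (x - t) 0 ^ 3 * iteratedDerivWithin 4 f (Set.Icc (-1:ℝ) 1) t := by
    intro x hx
    have h1 := GS.taylor4 hf hx
    rwa [GS.R_eq hc4 hx] at h1
  have hmain := GS.core (g := f) (c0 := f (-1))
      (c1 := iteratedDerivWithin 1 f (Set.Icc (-1:ℝ) 1) (-1))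
      (c2 := iteratedDerivWithin 2 f (Set.Icc (-1:ℝ) 1) (-1))
      (c3 := iteratedDerivWithin 3 f (Set.Icc (-1:ℝ) 1) (-1))
      hc4 h4 key
  have hn1 : -(Real.sqrt 3) / 3 = -GS.s := by
    rw [show GS.s = Real.sqrt 3 / 3 from rfl]; ring
  have hn2 : Real.sqrt 3 / 3 = GS.s := rfl
  rw [hn1, hn2]
  exact hmain
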